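/- The curve Γ₁ = ∇v(S¹ ∩ {x₂ ≥ |x₁|}), where v(x₁,x₂) = (x₂² - x₁²)/(√2|x|) on ℝ², is the graph {(s, φ(s)) : s ∈ [-1,1]} of an even function φ that is smooth and uniformly convex on (-1,1), C¹ up to the endpoints, with φ(±1) = 1 and φ'(±1) = ±1. -/

import Mathlib

open Set

/-- `v(x₁,x₂) = (1/√2)(x₂² - x₁²)/|x|` on `ℝ²`. -/
noncomputable def v2 (x : ℝ × ℝ) : ℝ :=
  (x.2 ^ 2 - x.1 ^ 2) / (Real.sqrt 2 * Real.sqrt (x.1 ^ 2 + x.2 ^ 2))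

/-- the gradient map `∇v`. -/
noncomputable def gradv (x : ℝ × ℝ) : ℝ × ℝ :=
  (fderiv ℝ v2 x (1, 0), fderiv ℝ v2 x (0, 1))

/-- `Γ₁ = ∇v(S¹ ∩ {x₂ ≥ |x₁|})`. -/
noncomputable def Gamma1 : Set (ℝ × ℝ) :=
  gradv '' {x : ℝ × ℝ | x.1 ^ 2 + x.2 ^ 2 = 1 ∧ |x.1| ≤ x.2}

lemma gradv_circle (x : ℝ × ℝ) (hx : x.1 ^ 2 + x.2 ^ 2 = 1) :
    gradv x = (x.1 * (2 * x.1 ^ 2 - 3) / Real.sqrt 2,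
               x.2 * (3 - 2 * x.2 ^ 2) / Real.sqrt 2) := by
  have h2 : (0:ℝ) < Real.sqrt 2 := Real.sqrt_pos.2 (by norm_num)
  have hf : HasFDerivAt (fun y : ℝ × ℝ => y.1) (ContinuousLinearMap.fst ℝ ℝ ℝ) x :=
    hasFDerivAt_fst
  have hs : HasFDerivAt (fun y : ℝ × ℝ => y.2) (ContinuousLinearMap.snd ℝ ℝ ℝ) x :=
    hasFDerivAt_snd
  have hN : HasFDerivAt (fun y : ℝ × ℝ => y.2 ^ 2 - y.1 ^ 2)
      (x.2 • ContinuousLinearMap.snd ℝ ℝ ℝ + x.2 • ContinuousLinearMap.snd ℝ ℝ ℝ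
        - (x.1 • ContinuousLinearMap.fst ℝ ℝ ℝ + x.1 • ContinuousLinearMap.fst ℝ ℝ ℝ)) x := by
    simpa only [pow_two, Pi.mul_def, Pi.sub_def] using (hs.mul hs).sub (hf.mul hf)
  have hQ : HasFDerivAt (fun y : ℝ × ℝ => y.1 ^ 2 + y.2 ^ 2)
      (x.1 • ContinuousLinearMap.fst ℝ ℝ ℝ + x.1 • ContinuousLinearMap.fst ℝ ℝ ℝ
        + (x.2 • ContinuousLinearMap.snd ℝ ℝ ℝ + x.2 • ContinuousLinearMap.snd ℝ ℝ ℝ)) x := by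
    simpa only [pow_two, Pi.mul_def, Pi.add_def] using (hf.mul hf).add (hs.mul hs)
  have hroot : HasFDerivAt (fun y : ℝ × ℝ => Real.sqrt (y.1 ^ 2 + y.2 ^ 2))
      ((1 / (2 * Real.sqrt (x.1 ^ 2 + x.2 ^ 2))) •
        (x.1 • ContinuousLinearMap.fst ℝ ℝ ℝ + x.1 • ContinuousLinearMap.fst ℝ ℝ ℝ
        + (x.2 • ContinuousLinearMap.snd ℝ ℝ ℝ + x.2 • ContinuousLinearMap.snd ℝ ℝ ℝ))) x :=
    (Real.hasDerivAt_sqrt (by rw [hx]; norm_num)).comp_hasFDerivAt x hQ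
  have hden : HasFDerivAt (fun y : ℝ × ℝ => Real.sqrt 2 * Real.sqrt (y.1 ^ 2 + y.2 ^ 2))
      (Real.sqrt 2 • ((1 / (2 * Real.sqrt (x.1 ^ 2 + x.2 ^ 2))) •
        (x.1 • ContinuousLinearMap.fst ℝ ℝ ℝ + x.1 • ContinuousLinearMap.fst ℝ ℝ ℝ
        + (x.2 • ContinuousLinearMap.snd ℝ ℝ ℝ + x.2 • ContinuousLinearMap.snd ℝ ℝ ℝ)))) x :=
    hroot.const_mul _
  have hden0 : Real.sqrt 2 * Real.sqrt (x.1 ^ 2 + x.2 ^ 2) ≠ 0 := by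
    rw [hx]; simp [h2.ne']
  have hinv := (hasDerivAt_inv hden0).comp_hasFDerivAt x hden
  rw [Function.comp_def] at hinv
  have hv := hN.mul hinv
  have hveq : v2 = fun y : ℝ × ℝ =>
      (y.2 ^ 2 - y.1 ^ 2) * (Real.sqrt 2 * Real.sqrt (y.1 ^ 2 + y.2 ^ 2))⁻¹ := by
    funext y; simp [v2, div_eq_mul_inv]
  simp only [Pi.mul_def] at hv
  rw [← hveq] at hv
  have hfd := hv.fderiv
  have hgv : gradv x = (fderiv ℝ v2 x (1,0), fderiv ℝ v2 x (0,1)) := rfl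
  rw [hgv, hfd, hx]
  simp only [ContinuousLinearMap.add_apply, ContinuousLinearMap.sub_apply,
    ContinuousLinearMap.smul_apply, ContinuousLinearMap.coe_fst', ContinuousLinearMap.coe_snd',
    smul_eq_mul, Real.sqrt_one]
  have h22 : Real.sqrt 2 * Real.sqrt 2 = 2 := Real.mul_self_sqrt (by norm_num)
  have hx2 : x.2 ^ 2 = 1 - x.1 ^ 2 := by linarith
  rw [Prod.ext_iff]
  constructor
  · simp only []
    field_simp
    linear_combination (-2 * x.1) * hx
  · simp only []
    field_simp
    linear_combination (2 * x.2) * hx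

noncomputable def aa (s : ℝ) : ℝ := Real.arcsin s / 3
noncomputable def cc (s : ℝ) : ℝ := Real.cos (2 * aa s)
noncomputable def phi1 (s : ℝ) : ℝ := Real.sqrt (cc s) * (3 - 2 * cc s) / Real.sqrt 2
noncomputable def psi1 (s : ℝ) : ℝ := Real.sqrt 2 * Real.sin (aa s) / Real.sqrt (cc s)

lemma aa_mem (s : ℝ) : aa s ∈ Icc (-(Real.pi/6)) (Real.pi/6) := by
  have h1 := Real.arcsin_mem_Icc s
  rw [aa]
  constructor
  · rw [le_div_iff₀ (by norm_num : (0:ℝ) < 3)]; linarith [h1.1]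
  · rw [div_le_iff₀ (by norm_num : (0:ℝ) < 3)]; linarith [h1.2]

lemma cc_ge (s : ℝ) : 1/2 ≤ cc s := by
  have h := aa_mem s
  have hpi := Real.pi_pos
  have : Real.cos (Real.pi/3) ≤ Real.cos (2 * aa s) := by
    rcases le_or_gt 0 (aa s) with h0 | h0
    · exact Real.cos_le_cos_of_nonneg_of_le_pi (by linarith) (by linarith [h.2]) (by linarith [h.2])
    · rw [← Real.cos_neg (2 * aa s)]
      exact Real.cos_le_cos_of_nonneg_of_le_pi (by linarith) (by linarith [h.1]) (by linarith [h.1])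
  rwa [Real.cos_pi_div_three] at this

lemma cc_le (s : ℝ) : cc s ≤ 1 := Real.cos_le_one _

lemma cc_pos (s : ℝ) : 0 < cc s := lt_of_lt_of_le (by norm_num) (cc_ge s)

lemma aa_neg (s : ℝ) : aa (-s) = -aa s := by simp [aa, Real.arcsin_neg, neg_div]

lemma cc_neg (s : ℝ) : cc (-s) = cc s := by simp [cc, aa_neg, Real.cos_neg, mul_neg]

lemma phi1_even (s : ℝ) : phi1 (-s) = phi1 s := by simp [phi1, cc_neg]

lemma psi1_odd (s : ℝ) : psi1 (-s) = -psi1 s := by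
  simp [psi1, aa_neg, cc_neg, Real.sin_neg, neg_div]

lemma sin_three_aa (s : ℝ) (hs : s ∈ Icc (-1:ℝ) 1) : Real.sin (3 * aa s) = s := by
  rw [aa, mul_div_cancel₀ _ (by norm_num : (3:ℝ) ≠ 0)]
  exact Real.sin_arcsin hs.1 hs.2

lemma cos_three_aa (s : ℝ) : Real.cos (3 * aa s) = Real.sqrt (1 - s^2) := by
  rw [aa, mul_div_cancel₀ _ (by norm_num : (3:ℝ) ≠ 0)]
  exact Real.cos_arcsin s

lemma cc_eq (s : ℝ) : cc s = 1 - 2 * Real.sin (aa s) ^ 2 := by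
  rw [cc, Real.cos_two_mul]
  have := Real.sin_sq_add_cos_sq (aa s)
  linarith

lemma hasDerivAt_aa {s : ℝ} (hs : s ∈ Ioo (-1:ℝ) 1) :
    HasDerivAt aa (1 / Real.sqrt (1 - s^2) / 3) s :=
  (Real.hasDerivAt_arcsin (ne_of_gt hs.1) (ne_of_lt hs.2)).div_const 3

lemma hasDerivAt_cc {s : ℝ} (hs : s ∈ Ioo (-1:ℝ) 1) :
    HasDerivAt cc (-Real.sin (2 * aa s) * (2 * (1 / Real.sqrt (1 - s^2) / 3))) s := by
  have h := (Real.hasDerivAt_cos (2 * aa s)).comp s ((hasDerivAt_aa hs).const_mul 2)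
  exact h

lemma hasDerivAt_phi1 {s : ℝ} (hs : s ∈ Ioo (-1:ℝ) 1) :
    HasDerivAt phi1 (psi1 s) s := by
  have hcpos := cc_pos s
  have hsq : HasDerivAt (fun t => Real.sqrt (cc t))
      (1 / (2 * Real.sqrt (cc s)) * (-Real.sin (2 * aa s) * (2 * (1 / Real.sqrt (1 - s^2) / 3)))) s :=
    (Real.hasDerivAt_sqrt hcpos.ne').comp s (hasDerivAt_cc hs)
  have hlin : HasDerivAt (fun t => 3 - 2 * cc t)
      (-(2 * (-Real.sin (2 * aa s) * (2 * (1 / Real.sqrt (1 - s^2) / 3))))) s :=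
    ((hasDerivAt_cc hs).const_mul 2).const_sub 3
  have h := ((hsq.mul hlin).div_const (Real.sqrt 2))
  have heq : phi1 = fun t => Real.sqrt (cc t) * (3 - 2 * cc t) / Real.sqrt 2 := rfl
  replace h : HasDerivAt phi1 _ s := h
  convert h using 1
  have hD : Real.sqrt (1 - s^2) = Real.cos (3 * aa s) := (cos_three_aa s).symm
  have hDpos : 0 < Real.sqrt (1 - s^2) := Real.sqrt_pos.2 (by nlinarith [hs.1, hs.2])
  have hscpos : 0 < Real.sqrt (cc s) := Real.sqrt_pos.2 hcpos
  have hr : Real.sqrt 2 * Real.sqrt 2 = 2 := Real.mul_self_sqrt (by norm_num)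
  have hrpos : (0:ℝ) < Real.sqrt 2 := Real.sqrt_pos.2 (by norm_num)
  have hsc2 : Real.sqrt (cc s) * Real.sqrt (cc s) = cc s := Real.mul_self_sqrt hcpos.le
  have hccval : cc s = 1 - 2 * Real.sin (aa s) ^ 2 := cc_eq s
  have h2a : Real.sin (2 * aa s) = 2 * Real.sin (aa s) * Real.cos (aa s) := Real.sin_two_mul _
  have h3a : Real.cos (3 * aa s) = 4 * Real.cos (aa s) ^ 3 - 3 * Real.cos (aa s) :=
    Real.cos_three_mul _
  have hpyth : Real.sin (aa s) ^ 2 + Real.cos (aa s) ^ 2 = 1 := Real.sin_sq_add_cos_sq _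
  have hD2 : (0:ℝ) < 4 * Real.cos (aa s) ^ 3 - 3 * Real.cos (aa s) := by
    rw [← h3a, ← hD]; exact hDpos
  have hfac : Real.cos (aa s) * (Real.cos (aa s) ^ 2 * 4 - 3) ≠ 0 := by
    rw [show Real.cos (aa s) * (Real.cos (aa s) ^ 2 * 4 - 3)
      = 4 * Real.cos (aa s) ^ 3 - 3 * Real.cos (aa s) by ring]
    exact hD2.ne'
  rw [psi1, hD, h2a, h3a]
  field_simp [left_ne_zero_of_mul hfac, right_ne_zero_of_mul hfac]
  linear_combination (3 * Real.sin (aa s) * (4 * Real.cos (aa s) ^ 2 - 3)) * hr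
    + (-8 * Real.sin (aa s)) * hsc2 + (-12 * Real.sin (aa s)) * hccval
    + (24 * Real.sin (aa s)) * hpyth

noncomputable def Phi2 (s : ℝ) : ℝ :=
  Real.sqrt 2 * Real.cos (aa s) / (3 * Real.sqrt (1 - s^2) * (cc s * Real.sqrt (cc s)))

lemma hasDerivAt_psi1 {s : ℝ} (hs : s ∈ Ioo (-1:ℝ) 1) :
    HasDerivAt psi1 (Phi2 s) s := by
  have hcpos := cc_pos s
  have hscpos : 0 < Real.sqrt (cc s) := Real.sqrt_pos.2 hcpos
  have hnum : HasDerivAt (fun t => Real.sqrt 2 * Real.sin (aa t))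
      (Real.sqrt 2 * (Real.cos (aa s) * (1 / Real.sqrt (1 - s^2) / 3))) s := by
    have h := (Real.hasDerivAt_sin (aa s)).comp s (hasDerivAt_aa hs)
    exact h.const_mul _
  have hsq : HasDerivAt (fun t => Real.sqrt (cc t))
      (1 / (2 * Real.sqrt (cc s)) * (-Real.sin (2 * aa s) * (2 * (1 / Real.sqrt (1 - s^2) / 3)))) s :=
    (Real.hasDerivAt_sqrt hcpos.ne').comp s (hasDerivAt_cc hs)
  have h := hnum.div hsq hscpos.ne'
  have heq : psi1 = fun t => Real.sqrt 2 * Real.sin (aa t) / Real.sqrt (cc t) := rfl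
  replace h : HasDerivAt psi1 _ s := h
  convert h using 1
  have hD : Real.sqrt (1 - s^2) = Real.cos (3 * aa s) := (cos_three_aa s).symm
  have hDpos : 0 < Real.sqrt (1 - s^2) := Real.sqrt_pos.2 (by nlinarith [hs.1, hs.2])
  have hr : Real.sqrt 2 * Real.sqrt 2 = 2 := Real.mul_self_sqrt (by norm_num)
  have hrpos : (0:ℝ) < Real.sqrt 2 := Real.sqrt_pos.2 (by norm_num)
  have hsc2 : Real.sqrt (cc s) * Real.sqrt (cc s) = cc s := Real.mul_self_sqrt hcpos.le
  have hccval : cc s = 1 - 2 * Real.sin (aa s) ^ 2 := cc_eq s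
  have h2a : Real.sin (2 * aa s) = 2 * Real.sin (aa s) * Real.cos (aa s) := Real.sin_two_mul _
  have h3a : Real.cos (3 * aa s) = 4 * Real.cos (aa s) ^ 3 - 3 * Real.cos (aa s) :=
    Real.cos_three_mul _
  have hpyth : Real.sin (aa s) ^ 2 + Real.cos (aa s) ^ 2 = 1 := Real.sin_sq_add_cos_sq _
  have hD2 : (0:ℝ) < 4 * Real.cos (aa s) ^ 3 - 3 * Real.cos (aa s) := by
    rw [← h3a, ← hD]; exact hDpos
  have hfac : Real.cos (aa s) * (Real.cos (aa s) ^ 2 * 4 - 3) ≠ 0 := by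
    rw [show Real.cos (aa s) * (Real.cos (aa s) ^ 2 * 4 - 3)
      = 4 * Real.cos (aa s) ^ 3 - 3 * Real.cos (aa s) by ring]
    exact hD2.ne'
  rw [Phi2, hD, h2a, h3a]
  field_simp [left_ne_zero_of_mul hfac, right_ne_zero_of_mul hfac]
  linear_combination (1 - cc s) * hsc2 + (-cc s) * hccval

lemma cos_aa_ge (s : ℝ) : Real.sqrt 3 / 2 ≤ Real.cos (aa s) := by
  have h := aa_mem s
  have hpi := Real.pi_pos
  have : Real.cos (Real.pi/6) ≤ Real.cos (aa s) := by
    rcases le_or_gt 0 (aa s) with h0 | h0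
    · exact Real.cos_le_cos_of_nonneg_of_le_pi h0 (by linarith) h.2
    · rw [← Real.cos_neg (aa s)]
      exact Real.cos_le_cos_of_nonneg_of_le_pi (by linarith) (by linarith [h.1]) (by linarith [h.1])
  rwa [Real.cos_pi_div_six] at this

lemma Phi2_ge {s : ℝ} (hs : s ∈ Ioo (-1:ℝ) 1) : 1/3 ≤ Phi2 s := by
  have hcpos := cc_pos s
  have hcle := cc_le s
  have hscpos : 0 < Real.sqrt (cc s) := Real.sqrt_pos.2 hcpos
  have hscle : Real.sqrt (cc s) ≤ 1 := Real.sqrt_le_one.mpr hcle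
  have hDpos : 0 < Real.sqrt (1 - s^2) := Real.sqrt_pos.2 (by nlinarith [hs.1, hs.2])
  have hDle : Real.sqrt (1 - s^2) ≤ 1 := Real.sqrt_le_one.mpr (by nlinarith [hs.1, hs.2])
  have hnum : 1 ≤ Real.sqrt 2 * Real.cos (aa s) := by
    have h1 := cos_aa_ge s
    have h2 : Real.sqrt 2 * (Real.sqrt 3 / 2) = Real.sqrt 6 / 2 := by
      rw [show (6:ℝ) = 2 * 3 by norm_num, Real.sqrt_mul (by norm_num)]; ring
    have h6 : 2 ≤ Real.sqrt 6 := by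
      nlinarith [Real.mul_self_sqrt (by norm_num : (0:ℝ) ≤ 6), Real.sqrt_nonneg 6]
    have hrpos : (0:ℝ) < Real.sqrt 2 := Real.sqrt_pos.2 (by norm_num)
    nlinarith
  have hden : 0 < 3 * Real.sqrt (1 - s^2) * (cc s * Real.sqrt (cc s)) := by positivity
  have h1 : cc s * Real.sqrt (cc s) ≤ 1 := mul_le_one₀ hcle hscpos.le hscle
  have hprod : Real.sqrt (1 - s^2) * (cc s * Real.sqrt (cc s)) ≤ 1 :=
    mul_le_one₀ hDle (by positivity) h1
  rw [Phi2, le_div_iff₀ hden]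
  nlinarith [hprod, hnum]

lemma deriv2_phi1 {s : ℝ} (hs : s ∈ Ioo (-1:ℝ) 1) : deriv (deriv phi1) s = Phi2 s := by
  have hev : deriv phi1 =ᶠ[nhds s] psi1 := by
    filter_upwards [isOpen_Ioo.mem_nhds hs] with t ht using (hasDerivAt_phi1 ht).deriv
  rw [hev.deriv_eq]
  exact (hasDerivAt_psi1 hs).deriv

lemma continuous_aa : Continuous aa := Real.continuous_arcsin.div_const 3

lemma continuous_cc : Continuous cc :=
  Real.continuous_cos.comp (continuous_const.mul continuous_aa)

lemma continuous_phi1 : Continuous phi1 :=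
  ((Real.continuous_sqrt.comp continuous_cc).mul
    (continuous_const.sub (continuous_const.mul continuous_cc))).div_const _

lemma continuous_psi1 : Continuous psi1 :=
  (continuous_const.mul (Real.continuous_sin.comp continuous_aa)).div
    (Real.continuous_sqrt.comp continuous_cc)
    (fun s => (Real.sqrt_pos.2 (cc_pos s)).ne')

lemma contDiffOn_phi1 : ContDiffOn ℝ (⊤ : ℕ∞) phi1 (Ioo (-1) 1) := by
  intro s hs
  have haa : ContDiffAt ℝ (⊤ : ℕ∞) aa s :=
    (Real.contDiffAt_arcsin (ne_of_gt hs.1) (ne_of_lt hs.2)).div_const 3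
  have hcc : ContDiffAt ℝ (⊤ : ℕ∞) cc s :=
    (Real.contDiff_cos.contDiffAt).comp s (contDiffAt_const.mul haa)
  have hsq : ContDiffAt ℝ (⊤ : ℕ∞) (fun t => Real.sqrt (cc t)) s :=
    (Real.contDiffAt_sqrt (cc_pos s).ne').comp s hcc
  exact ((hsq.mul (contDiffAt_const.sub (contDiffAt_const.mul hcc))).div_const _).contDiffWithinAt

lemma aa_one : aa 1 = Real.pi / 6 := by
  rw [aa, Real.arcsin_one]; ring

lemma cc_one : cc 1 = 1/2 := by
  rw [cc, aa_one, show 2 * (Real.pi/6) = Real.pi/3 by ring, Real.cos_pi_div_three]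

lemma phi1_one : phi1 1 = 1 := by
  have hr : Real.sqrt 2 * Real.sqrt 2 = 2 := Real.mul_self_sqrt (by norm_num)
  have hrpos : (0:ℝ) < Real.sqrt 2 := Real.sqrt_pos.2 (by norm_num)
  rw [phi1, cc_one, show (1:ℝ)/2 = 2⁻¹ by norm_num, Real.sqrt_inv]
  field_simp
  linarith [hr]

lemma psi1_one : psi1 1 = 1 := by
  have hr : Real.sqrt 2 * Real.sqrt 2 = 2 := Real.mul_self_sqrt (by norm_num)
  have hrpos : (0:ℝ) < Real.sqrt 2 := Real.sqrt_pos.2 (by norm_num)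
  rw [psi1, aa_one, cc_one, Real.sin_pi_div_six, show (1:ℝ)/2 = 2⁻¹ by norm_num, Real.sqrt_inv]
  field_simp
  exact Real.sq_sqrt (by norm_num)

lemma hasDerivWithinAt_phi1 {s : ℝ} (hs : s ∈ Icc (-1:ℝ) 1) :
    HasDerivWithinAt phi1 (psi1 s) (Icc (-1) 1) s := by
  have hdiff : DifferentiableOn ℝ phi1 (Ioo (-1:ℝ) 1) := fun t ht =>
    (hasDerivAt_phi1 ht).differentiableAt.differentiableWithinAt
  have hderiv_eq : ∀ t ∈ Ioo (-1:ℝ) 1, deriv phi1 t = psi1 t := fun t ht =>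
    (hasDerivAt_phi1 ht).deriv
  rcases eq_or_lt_of_le hs.1 with h1 | h1
  · -- s = -1
    subst h1
    have hmem : Ioo (-1:ℝ) 1 ∈ nhdsWithin (-1:ℝ) (Ioi (-1)) :=
      Ioo_mem_nhdsGT_of_mem (by constructor <;> norm_num)
    have htend : Filter.Tendsto (fun t => deriv phi1 t) (nhdsWithin (-1:ℝ) (Ioi (-1)))
        (nhds (psi1 (-1))) := by
      apply Filter.Tendsto.congr' (f₁ := psi1)
      · filter_upwards [hmem] with t ht using (hderiv_eq t ht).symm
      · exact (continuous_psi1.tendsto _).mono_left nhdsWithin_le_nhds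
    have := hasDerivWithinAt_Ici_of_tendsto_deriv hdiff
      continuous_phi1.continuousWithinAt hmem htend
    exact this.mono Icc_subset_Ici_self
  rcases eq_or_lt_of_le hs.2 with h2 | h2
  · -- s = 1
    subst h2
    have hmem : Ioo (-1:ℝ) 1 ∈ nhdsWithin (1:ℝ) (Iio 1) :=
      Ioo_mem_nhdsLT_of_mem (by constructor <;> norm_num)
    have htend : Filter.Tendsto (fun t => deriv phi1 t) (nhdsWithin (1:ℝ) (Iio 1))
        (nhds (psi1 1)) := by
      apply Filter.Tendsto.congr' (f₁ := psi1)
      · filter_upwards [hmem] with t ht using (hderiv_eq t ht).symm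
      · exact (continuous_psi1.tendsto _).mono_left nhdsWithin_le_nhds
    have := hasDerivWithinAt_Iic_of_tendsto_deriv hdiff
      continuous_phi1.continuousWithinAt hmem htend
    exact this.mono Icc_subset_Iic_self
  · exact (hasDerivAt_phi1 ⟨h1, h2⟩).hasDerivWithinAt

lemma arcsin_half : Real.arcsin (1/2) = Real.pi / 6 := by
  have hpi := Real.pi_pos
  rw [← Real.sin_pi_div_six]
  exact Real.arcsin_sin (by linarith) (by linarith)

set_option maxHeartbeats 2000000 in
lemma gamma1_graph (gradv' : ℝ × ℝ → ℝ × ℝ)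
    (hg : ∀ x : ℝ × ℝ, x.1 ^ 2 + x.2 ^ 2 = 1 →
      gradv' x = (x.1 * (2 * x.1 ^ 2 - 3) / Real.sqrt 2,
                  x.2 * (3 - 2 * x.2 ^ 2) / Real.sqrt 2)) :
    gradv' '' {x : ℝ × ℝ | x.1 ^ 2 + x.2 ^ 2 = 1 ∧ |x.1| ≤ x.2}
      = {p : ℝ × ℝ | ∃ s ∈ Icc (-1:ℝ) 1, p = (s, phi1 s)} := by
  have hr : Real.sqrt 2 * Real.sqrt 2 = 2 := Real.mul_self_sqrt (by norm_num)
  have hrpos : (0:ℝ) < Real.sqrt 2 := Real.sqrt_pos.2 (by norm_num)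
  have hpi := Real.pi_pos
  ext p
  constructor
  · rintro ⟨x, ⟨hx1, hx2⟩, rfl⟩
    have hx20 : 0 ≤ x.2 := le_trans (abs_nonneg _) hx2
    have hx1sq : x.1 ^ 2 ≤ 1/2 := by
      have h := pow_le_pow_left₀ (abs_nonneg x.1) hx2 2
      rw [sq_abs] at h
      linarith
    set u : ℝ := -(x.1 / Real.sqrt 2) with hu
    clear_value u
    have husq : u ^ 2 = x.1 ^ 2 / 2 := by
      rw [hu]; field_simp
      rw [Real.sq_sqrt (by norm_num : (0:ℝ) ≤ 2)]
    have habs : |u| ≤ 1/2 := by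
      rw [abs_le]; constructor <;> nlinarith [sq_nonneg (u - 1/2), sq_nonneg (u + 1/2)]
    set w : ℝ := Real.arcsin u with hwdef
    clear_value w
    have habs' : -(1/2:ℝ) ≤ u ∧ u ≤ 1/2 := abs_le.1 habs
    have hsinw : Real.sin w = u := by
      rw [hwdef]; exact Real.sin_arcsin (by linarith [habs'.1]) (by linarith [habs'.2])
    have hw1 : w ≤ Real.pi / 6 := by
      rw [hwdef, ← arcsin_half]; exact Real.monotone_arcsin (by linarith [habs'.2])
    have hw2 : -(Real.pi / 6) ≤ w := by
      rw [hwdef, ← arcsin_half, ← Real.arcsin_neg]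
      exact Real.monotone_arcsin (by linarith [habs'.1])
    refine ⟨Real.sin (3 * w), ⟨Real.neg_one_le_sin _, Real.sin_le_one _⟩, ?_⟩
    have haas : aa (Real.sin (3 * w)) = w := by
      rw [aa, Real.arcsin_sin (by linarith) (by linarith)]; ring
    have hccs : cc (Real.sin (3 * w)) = x.2 ^ 2 := by
      rw [cc_eq, haas, hsinw]
      linarith [husq, hx1]
    have hsqcc : Real.sqrt (cc (Real.sin (3 * w))) = x.2 := by
      rw [hccs, Real.sqrt_sq hx20]
    have hs_val : x.1 * (2 * x.1 ^ 2 - 3) / Real.sqrt 2 = Real.sin (3 * w) := by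
      rw [Real.sin_three_mul, hsinw, hu]
      field_simp
      linear_combination (2 * x.1 ^ 3) * hr
    rw [hg x hx1]
    rw [Prod.ext_iff]
    constructor
    · exact hs_val
    · show x.2 * (3 - 2 * x.2 ^ 2) / Real.sqrt 2 = phi1 (Real.sin (3*w))
      rw [phi1, hsqcc, hccs]
  · rintro ⟨s, hs, rfl⟩
    set w : ℝ := aa s with hwdef
    set x1 : ℝ := -(Real.sqrt 2 * Real.sin w) with hx1def
    set x2 : ℝ := Real.sqrt (cc s) with hx2def
    have hx2sq : x2 ^ 2 = cc s := Real.sq_sqrt (cc_pos s).le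
    have hx20 : 0 ≤ x2 := Real.sqrt_nonneg _
    have hx1sq : x1 ^ 2 = 2 * Real.sin w ^ 2 := by
      rw [hx1def]; rw [neg_pow, mul_pow]; rw [Real.sq_sqrt (by norm_num : (0:ℝ) ≤ 2)]; ring
    have hcceq : cc s = 1 - 2 * Real.sin w ^ 2 := cc_eq s
    have hcirc : x1 ^ 2 + x2 ^ 2 = 1 := by rw [hx1sq, hx2sq, hcceq]; ring
    have hsqle : x1 ^ 2 ≤ x2 ^ 2 := by
      have := cc_ge s
      rw [hx1sq, hx2sq]; linarith [hcceq]
    have habs : |x1| ≤ x2 := by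
      rw [← Real.sqrt_sq_eq_abs, ← Real.sqrt_sq hx20]
      exact Real.sqrt_le_sqrt hsqle
    refine ⟨(x1, x2), ⟨hcirc, habs⟩, ?_⟩
    rw [hg (x1, x2) hcirc]
    rw [Prod.ext_iff]
    constructor
    · show x1 * (2 * x1 ^ 2 - 3) / Real.sqrt 2 = s
      rw [← sin_three_aa s hs, Real.sin_three_mul, ← hwdef, hx1def]
      field_simp
      linear_combination (-2 * Real.sin w ^ 3) * hr
    · show x2 * (3 - 2 * x2 ^ 2) / Real.sqrt 2 = phi1 s
      rw [phi1, hx2sq]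


/-- `Γ₁` is the graph over `[-1,1]` of an even function `φ`, smooth and uniformly convex on
`(-1,1)`, `C¹` up to the endpoints (with derivative `ψ`), with `φ(±1) = 1`, `φ'(±1) = ±1`. -/
theorem stmt10 :
    ∃ φ ψ : ℝ → ℝ,
      (∀ s, φ (-s) = φ s) ∧
      ContDiffOn ℝ (⊤ : ℕ∞) φ (Ioo (-1) 1) ∧
      (∃ c > (0 : ℝ), ∀ s ∈ Ioo (-1 : ℝ) 1, c ≤ deriv (deriv φ) s) ∧
      ContinuousOn φ (Icc (-1) 1) ∧ ContinuousOn ψ (Icc (-1) 1) ∧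
      (∀ s ∈ Icc (-1 : ℝ) 1, HasDerivWithinAt φ (ψ s) (Icc (-1) 1) s) ∧
      φ 1 = 1 ∧ φ (-1) = 1 ∧ ψ 1 = 1 ∧ ψ (-1) = -1 ∧
      Gamma1 = {p : ℝ × ℝ | ∃ s ∈ Icc (-1 : ℝ) 1, p = (s, φ s)} := by
  refine ⟨phi1, psi1, phi1_even, contDiffOn_phi1,
    ⟨1/3, by norm_num, fun s hs => by rw [deriv2_phi1 hs]; exact Phi2_ge hs⟩,
    continuous_phi1.continuousOn, continuous_psi1.continuousOn,
    fun s hs => hasDerivWithinAt_phi1 hs,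
    phi1_one, by rw [show (-1:ℝ) = -(1:ℝ) by norm_num, phi1_even]; exact phi1_one,
    psi1_one, by rw [show (-1:ℝ) = -(1:ℝ) by norm_num, psi1_odd, psi1_one],
    gamma1_graph gradv gradv_circle⟩
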